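/- Let {C_α} be closed convex sets in a Hilbert space H with C = ⋂_α C_α ≠ ∅, let {t_n} ⊂ [0,1] with ∑ t_n² = ∞, and let {x_n} be a sequence of remote projections with parameters {t_n} starting from any x₀ ∈ H. Then there is a subsequence of {x_n} along which sup_α dist(x_n, C_α) → 0, and in particular {x_n} has a weak cluster point belonging to C. -/

import Mathlib

open Filter

private lemma aux_obtuse {H : Type*} [NormedAddCommGroup H] [InnerProductSpace ℝ H]
    {K : Set H} (hconv : Convex ℝ K) {u p : H} (hp : p ∈ K)
    (hnear : ∀ y ∈ K, ‖u - p‖ ≤ ‖u - y‖) :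
    ∀ y ∈ K, (inner ℝ (u - p) (y - p) : ℝ) ≤ 0 := by
  haveI : Nonempty K := ⟨⟨p, hp⟩⟩
  have h1 : ‖u - p‖ = ⨅ w : K, ‖u - (w : H)‖ := by
    refine le_antisymm (le_ciInf fun w => hnear w w.2) ?_
    refine ciInf_le ⟨0, ?_⟩ (⟨p, hp⟩ : K)
    rintro a ⟨w, rfl⟩
    exact norm_nonneg _
  exact (norm_eq_iInf_iff_real_inner_le_zero hconv hp).mp h1

private def cauchyA {H : Type*} [NormedAddCommGroup H] [InnerProductSpace ℝ H]
    (v : ℕ → H) : Submodule ℝ H where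
  carrier := {z | CauchySeq (fun k => (inner ℝ (v k) z : ℝ))}
  add_mem' := by
    intro a b ha hb
    have h : (fun k => (inner ℝ (v k) (a + b) : ℝ))
        = fun k => (inner ℝ (v k) a : ℝ) + inner ℝ (v k) b := by
      funext k; exact inner_add_right _ _ _
    simpa only [Set.mem_setOf_eq, h, Pi.add_def] using ha.add hb
  zero_mem' := by
    have h : (fun k => (inner ℝ (v k) (0:H) : ℝ)) = fun _ => (0:ℝ) := by
      funext k; simp
    simpa only [Set.mem_setOf_eq, h] using cauchySeq_const (0:ℝ)
  smul_mem' := by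
    intro r a ha
    have h : (fun k => (inner ℝ (v k) (r • a) : ℝ)) = fun k => r * inner ℝ (v k) a := by
      funext k; exact real_inner_smul_right _ _ _
    have h2 := (uniformContinuous_const_smul (M := ℝ) r).comp_cauchySeq ha
    simpa only [Set.mem_setOf_eq, h, Function.comp_def, smul_eq_mul] using h2

private lemma mem_cauchyA {H : Type*} [NormedAddCommGroup H] [InnerProductSpace ℝ H]
    {v : ℕ → H} {z : H} : z ∈ cauchyA v ↔ CauchySeq (fun k => (inner ℝ (v k) z : ℝ)) :=
  Iff.rfl

private lemma cauchyA_closed {H : Type*} [NormedAddCommGroup H] [InnerProductSpace ℝ H]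
    (v : ℕ → H) (M : ℝ) (hMv : ∀ k, ‖v k‖ ≤ M) :
    IsClosed ((cauchyA v : Submodule ℝ H) : Set H) := by
  apply isClosed_of_closure_subset
  intro z hz
  have hz' := Metric.mem_closure_iff.mp hz
  have hM0 : 0 ≤ M := le_trans (norm_nonneg (v 0)) (hMv 0)
  rw [SetLike.mem_coe, mem_cauchyA, Metric.cauchySeq_iff]
  intro ε hε
  have hM1 : (0:ℝ) < M + 1 := by linarith
  obtain ⟨a, haA, hdista⟩ := hz' (ε / (4 * (M+1))) (by positivity)
  have haC : CauchySeq (fun k => (inner ℝ (v k) a : ℝ)) := haA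
  obtain ⟨N, hN⟩ := Metric.cauchySeq_iff.mp haC (ε/2) (by positivity)
  refine ⟨N, fun m hm n hn => ?_⟩
  have hza : ‖z - a‖ < ε / (4 * (M+1)) := by
    rw [← dist_eq_norm]; exact hdista
  have hbound : ∀ k, |(inner ℝ (v k) (z - a) : ℝ)| ≤ M * ‖z - a‖ := fun k =>
    (abs_real_inner_le_norm _ _).trans
      (mul_le_mul_of_nonneg_right (hMv k) (norm_nonneg _))
  have hMza : M * ‖z - a‖ ≤ ε/4 := by
    have h1 : M * ‖z - a‖ ≤ (M+1) * (ε / (4 * (M+1))) := by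
      apply mul_le_mul (by linarith) hza.le (norm_nonneg _) (by linarith)
    have h2 : (M+1) * (ε / (4 * (M+1))) = ε/4 := by field_simp
    linarith
  have hsplit : (inner ℝ (v m) z : ℝ) - inner ℝ (v n) z =
      (inner ℝ (v m) (z - a) : ℝ) + ((inner ℝ (v m) a : ℝ) - inner ℝ (v n) a)
        - (inner ℝ (v n) (z - a) : ℝ) := by
    simp only [inner_sub_right]; ring
  rw [Real.dist_eq, hsplit]
  have hc1 := hbound m
  have hc2 := hbound n
  have hc3 : |(inner ℝ (v m) a : ℝ) - inner ℝ (v n) a| < ε/2 := by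
    have := hN m hm n hn; rwa [Real.dist_eq] at this
  have habs : ∀ p q r : ℝ, |p + q - r| ≤ |p| + |q| + |r| := by
    intro p q r
    calc |p + q - r| ≤ |p + q| + |r| := abs_sub _ _
      _ ≤ |p| + |q| + |r| := by linarith [abs_add_le p q]
  calc |(inner ℝ (v m) (z - a) : ℝ) + ((inner ℝ (v m) a : ℝ) - inner ℝ (v n) a)
        - (inner ℝ (v n) (z - a) : ℝ)|
      ≤ |(inner ℝ (v m) (z - a) : ℝ)| + |(inner ℝ (v m) a : ℝ) - inner ℝ (v n) a|
        + |(inner ℝ (v n) (z - a) : ℝ)| := habs _ _ _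
    _ < ε := by linarith

private lemma aux_weak {H : Type*} [NormedAddCommGroup H] [InnerProductSpace ℝ H]
    [CompleteSpace H] (u : ℕ → H) (M : ℝ) (hMu : ∀ k, ‖u k‖ ≤ M) :
    ∃ (σ : ℕ → ℕ) (w : H), StrictMono σ ∧
      ∀ y : H, Tendsto (fun k => (inner ℝ (u (σ k)) y : ℝ)) atTop (nhds (inner ℝ w y)) := by
  have hM0 : 0 ≤ M := le_trans (norm_nonneg (u 0)) (hMu 0)
  have hgmem : ∀ k, (fun m => (inner ℝ (u k) (u m) : ℝ)) ∈
      Set.univ.pi (fun _ : ℕ => Set.Icc (-(M*M)) (M*M)) := by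
    intro k
    rw [Set.mem_univ_pi]
    intro m
    have habs : |(inner ℝ (u k) (u m) : ℝ)| ≤ M * M := by
      refine (abs_real_inner_le_norm _ _).trans ?_
      exact mul_le_mul (hMu k) (hMu m) (norm_nonneg _) hM0
    exact ⟨neg_le_of_abs_le habs, le_of_abs_le habs⟩
  obtain ⟨L, _, σ, hσmono, hσtend⟩ :=
    (isCompact_univ_pi (fun _ : ℕ => isCompact_Icc)).tendsto_subseq hgmem
  have hpt : ∀ m, Tendsto (fun k => (inner ℝ (u (σ k)) (u m) : ℝ)) atTop (nhds (L m)) :=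
    fun m => tendsto_pi_nhds.mp hσtend m
  have hMv : ∀ k, ‖u (σ k)‖ ≤ M := fun k => hMu _
  have hrangeA : Set.range u ⊆ ((cauchyA (fun k => u (σ k)) : Submodule ℝ H) : Set H) := by
    rintro _ ⟨m, rfl⟩
    exact (hpt m).cauchySeq
  set K : Submodule ℝ H := (Submodule.span ℝ (Set.range u)).topologicalClosure with hK
  have hKA : K ≤ cauchyA (fun k => u (σ k)) :=
    Submodule.topologicalClosure_minimal _ (Submodule.span_le.mpr hrangeA)
      (cauchyA_closed _ M hMv)
  haveI : CompleteSpace K :=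
    (Submodule.isClosed_topologicalClosure _).completeSpace_coe
  have hvK : ∀ k, u (σ k) ∈ K := fun k =>
    (Submodule.le_topologicalClosure _) (Submodule.subset_span ⟨σ k, rfl⟩)
  have hKperpA : Kᗮ ≤ cauchyA (fun k => u (σ k)) := by
    intro z hz
    have h : (fun k => (inner ℝ (u (σ k)) z : ℝ)) = fun _ => (0:ℝ) := by
      funext k
      exact (Submodule.mem_orthogonal K z).mp hz _ (hvK k)
    rw [mem_cauchyA, h]
    exact cauchySeq_const 0
  have hAtop : ∀ z : H, CauchySeq (fun k => (inner ℝ (u (σ k)) z : ℝ)) := by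
    intro z
    have hz : z ∈ K ⊔ Kᗮ := by
      rw [Submodule.sup_orthogonal_of_hasOrthogonalProjection]
      trivial
    exact (sup_le hKA hKperpA) hz
  have hconvz : ∀ z : H, ∃ l, Tendsto (fun k => (inner ℝ (u (σ k)) z : ℝ)) atTop (nhds l) :=
    fun z => cauchySeq_tendsto_of_complete (hAtop z)
  choose l hl using hconvz
  have hladd : ∀ a b : H, l (a+b) = l a + l b := by
    intro a b
    refine tendsto_nhds_unique (hl (a+b)) ?_
    exact ((hl a).add (hl b)).congr (fun k => (inner_add_right _ _ _).symm)
  have hlsmul : ∀ (r : ℝ) (a : H), l (r • a) = r * l a := by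
    intro r a
    refine tendsto_nhds_unique (hl (r • a)) ?_
    exact ((hl a).const_mul r).congr (fun k => (real_inner_smul_right _ _ _).symm)
  have hlbound : ∀ z : H, |l z| ≤ M * ‖z‖ := by
    intro z
    refine le_of_tendsto (hl z).abs (Filter.Eventually.of_forall fun k => ?_)
    exact (abs_real_inner_le_norm _ _).trans
      (mul_le_mul_of_nonneg_right (hMv k) (norm_nonneg _))
  let Flin : H →ₗ[ℝ] ℝ :=
    { toFun := l
      map_add' := hladd
      map_smul' := fun r a => by simpa using hlsmul r a }
  let F : H →L[ℝ] ℝ := LinearMap.mkContinuous Flin M fun z => by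
    simpa [Real.norm_eq_abs, Flin] using hlbound z
  refine ⟨σ, (InnerProductSpace.toDual ℝ H).symm F, hσmono, fun y => ?_⟩
  have hwz : (inner ℝ ((InnerProductSpace.toDual ℝ H).symm F) y : ℝ) = l y :=
    InnerProductSpace.toDual_symm_apply
  rw [hwz]
  exact hl y

theorem stmt_13 {H : Type*} [NormedAddCommGroup H] [InnerProductSpace ℝ H]
    [CompleteSpace H]
    {Ω : Type*} [Nonempty Ω] (C : Ω → Set H)
    (hclosed : ∀ α, IsClosed (C α)) (hconv : ∀ α, Convex ℝ (C α))
    (hCne : (⋂ α, C α).Nonempty)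
    (P : Ω → H → H)
    (hPmem : ∀ α x, P α x ∈ C α)
    (hPnear : ∀ α x, ∀ y ∈ C α, ‖x - P α x‖ ≤ ‖x - y‖)
    (t : ℕ → ℝ) (ht : ∀ n, t n ∈ Set.Icc (0 : ℝ) 1)
    (hdiv : ¬ Summable (fun n => t n ^ 2))
    (α : ℕ → Ω) (x : ℕ → H)
    (hrec : ∀ n, x (n + 1) = P (α n) (x n))
    (hremote : ∀ n, t n * (⨆ β, Metric.infDist (x n) (C β)) ≤
      Metric.infDist (x n) (C (α n))) :
    (∃ φ : ℕ → ℕ, StrictMono φ ∧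
      Tendsto (fun k => ⨆ β, Metric.infDist (x (φ k)) (C β)) atTop (nhds 0)) ∧
    ∃ w ∈ ⋂ β, C β, ∃ ψ : ℕ → ℕ, StrictMono ψ ∧
      ∀ y : H, Tendsto (fun k => (inner ℝ (x (ψ k)) y : ℝ)) atTop (nhds (inner ℝ w y)) := by
  obtain ⟨c, hc⟩ := hCne
  have hcβ : ∀ β, c ∈ C β := by simpa [Set.mem_iInter] using hc
  set S : ℕ → ℝ := fun n => ⨆ β, Metric.infDist (x n) (C β) with hS
  have hbdd : ∀ n, BddAbove (Set.range fun β => Metric.infDist (x n) (C β)) := by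
    intro n
    refine ⟨‖x n - c‖, ?_⟩
    rintro a ⟨β, rfl⟩
    simpa [dist_eq_norm] using Metric.infDist_le_dist_of_mem (hcβ β)
  have hS0 : ∀ n, 0 ≤ S n := fun n =>
    le_trans Metric.infDist_nonneg (le_ciSup (hbdd n) (Classical.arbitrary Ω))
  have hdistP : ∀ β z, Metric.infDist z (C β) = ‖z - P β z‖ := by
    intro β z
    haveI : Nonempty (C β) := ⟨⟨P β z, hPmem β z⟩⟩
    refine le_antisymm ?_ ?_
    · simpa [dist_eq_norm] using Metric.infDist_le_dist_of_mem (hPmem β z)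
    · rw [Metric.infDist_eq_iInf]
      exact le_ciInf fun w => by simpa [dist_eq_norm] using hPnear β z w w.2
  -- Fejér monotonicity
  have key : ∀ n, ‖x (n+1) - c‖^2 + ‖x n - x (n+1)‖^2 ≤ ‖x n - c‖^2 := by
    intro n
    have e : x (n+1) = P (α n) (x n) := hrec n
    have hob := aux_obtuse (hconv (α n)) (hPmem (α n) (x n)) (hPnear (α n) (x n)) c (hcβ (α n))
    rw [← e] at hob
    have h2 : ‖x n - c‖^2 =
        ‖x n - x (n+1)‖^2 + 2 * (inner ℝ (x n - x (n+1)) (x (n+1) - c) : ℝ) + ‖x (n+1) - c‖^2 := by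
      have h := norm_add_sq_real (x n - x (n+1)) (x (n+1) - c)
      rw [sub_add_sub_cancel] at h
      linarith
    have h3 : (0:ℝ) ≤ inner ℝ (x n - x (n+1)) (x (n+1) - c) := by
      have h4 : (inner ℝ (x n - x (n+1)) (c - x (n+1)) : ℝ) ≤ 0 := hob
      have h5 : (inner ℝ (x n - x (n+1)) (x (n+1) - c) : ℝ)
          = - inner ℝ (x n - x (n+1)) (c - x (n+1)) := by
        rw [← inner_neg_right, neg_sub]
      linarith [h5 ▸ neg_nonneg.mpr h4]
    linarith
  have hD : ∀ n, ‖x (n+1) - c‖ ≤ ‖x n - c‖ := by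
    intro n
    have hsq : ‖x (n+1) - c‖^2 ≤ ‖x n - c‖^2 := by nlinarith [key n, sq_nonneg ‖x n - x (n+1)‖]
    have := Real.sqrt_le_sqrt hsq
    simpa [Real.sqrt_sq (norm_nonneg _)] using this
  have hanti : ∀ n, ‖x n - c‖ ≤ ‖x 0 - c‖ := by
    intro n
    induction n with
    | zero => exact le_refl _
    | succ n ih => exact (hD n).trans ih
  -- summability
  have hpartial : ∀ n, (∑ i ∈ Finset.range n, ‖x i - x (i+1)‖^2) + ‖x n - c‖^2 ≤ ‖x 0 - c‖^2 := by
    intro n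
    induction n with
    | zero => simp
    | succ n ih =>
      rw [Finset.sum_range_succ]
      have := key n
      linarith
  have hsum : Summable (fun n => ‖x n - x (n+1)‖^2) := by
    refine summable_of_sum_range_le (fun n => sq_nonneg _) (c := ‖x 0 - c‖^2) fun n => ?_
    have := hpartial n
    nlinarith [sq_nonneg ‖x n - c‖]
  have hsum2 : Summable (fun n => (t n * S n)^2) := by
    refine Summable.of_nonneg_of_le (fun n => sq_nonneg _) (fun n => ?_) hsum
    have h1 : t n * S n ≤ ‖x n - x (n+1)‖ := by
      calc t n * S n ≤ Metric.infDist (x n) (C (α n)) := hremote n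
        _ = ‖x n - P (α n) (x n)‖ := hdistP _ _
        _ = ‖x n - x (n+1)‖ := by rw [hrec n]
    have h0 : 0 ≤ t n * S n := mul_nonneg (ht n).1 (hS0 n)
    nlinarith
  -- S frequently small
  have hfreq : ∀ j : ℕ, ∃ᶠ n in atTop, S n < 1/(j+1) := by
    intro j
    by_contra hcon
    rw [Filter.not_frequently] at hcon
    obtain ⟨N, hN⟩ := eventually_atTop.mp hcon
    have hε : (0:ℝ) < 1/(j+1) := by positivity
    apply hdiv
    rw [← summable_nat_add_iff N]
    have hsum3 : Summable (fun n => (t (n+N) * S (n+N))^2 * ((1/(j+1):ℝ))⁻¹^2) :=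
      ((summable_nat_add_iff N).mpr hsum2).mul_right _
    refine Summable.of_nonneg_of_le (fun n => sq_nonneg _) (fun n => ?_) hsum3
    have hSn : (1:ℝ)/(j+1) ≤ S (n+N) := not_lt.mp (hN (n+N) (by omega))
    have h0 := (ht (n+N)).1
    have hinv0 : (0:ℝ) ≤ ((1/(j+1):ℝ))⁻¹ := le_of_lt (by positivity)
    have h1 : 1 ≤ S (n+N) * ((1/(j+1):ℝ))⁻¹ := by
      calc (1:ℝ) = (1/(j+1):ℝ) * ((1/(j+1):ℝ))⁻¹ := by field_simp
        _ ≤ S (n+N) * ((1/(j+1):ℝ))⁻¹ := mul_le_mul_of_nonneg_right hSn hinv0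
    have h2 : 1 ≤ (S (n+N) * ((1/(j+1):ℝ))⁻¹)^2 := by nlinarith
    calc t (n+N)^2 = t (n+N)^2 * 1 := by ring
      _ ≤ t (n+N)^2 * (S (n+N) * ((1/(j+1):ℝ))⁻¹)^2 := by nlinarith [sq_nonneg (t (n+N))]
      _ = (t (n+N) * S (n+N))^2 * ((1/(j+1):ℝ))⁻¹^2 := by ring
  obtain ⟨φ, hφmono, hφ⟩ := Filter.extraction_forall_of_frequently hfreq
  have hStend : Tendsto (fun k => S (φ k)) atTop (nhds 0) :=
    squeeze_zero (fun k => hS0 _) (fun k => (hφ k).le) tendsto_one_div_add_atTop_nhds_zero_nat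
  constructor
  · exact ⟨φ, hφmono, by simpa only [hS] using hStend⟩
  -- boundedness and weak limit
  have hM : ∀ n, ‖x n‖ ≤ ‖x 0 - c‖ + ‖c‖ := by
    intro n
    calc ‖x n‖ = ‖(x n - c) + c‖ := by rw [sub_add_cancel]
      _ ≤ ‖x n - c‖ + ‖c‖ := norm_add_le _ _
      _ ≤ ‖x 0 - c‖ + ‖c‖ := by linarith [hanti n]
  obtain ⟨σ, w, hσmono, hweak'⟩ :=
    aux_weak (fun k => x (φ k)) (‖x 0 - c‖ + ‖c‖) (fun k => hM _)
  have hψmono : StrictMono (fun k => φ (σ k)) := hφmono.comp hσmono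
  have hweak : ∀ y : H, Tendsto (fun k => (inner ℝ (x (φ (σ k))) y : ℝ)) atTop
      (nhds (inner ℝ w y)) := hweak'
  -- weak limit is in every C β
  have hwC : ∀ β, w ∈ C β := by
    intro β
    have hob := aux_obtuse (hconv β) (hPmem β w) (hPnear β w)
    have he : Tendsto (fun k => Metric.infDist (x (φ (σ k))) (C β)) atTop (nhds 0) := by
      refine squeeze_zero (fun k => Metric.infDist_nonneg) (fun k => ?_)
        (hStend.comp hσmono.tendsto_atTop)
      exact le_ciSup (hbdd _) β
    have hineq : ∀ k, ‖w - P β w‖^2 ≤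
        ((inner ℝ w (w - P β w) : ℝ) - inner ℝ (x (φ (σ k))) (w - P β w))
          + Metric.infDist (x (φ (σ k))) (C β) * ‖w - P β w‖ := by
      intro k
      have h1 : (inner ℝ (w - P β w) (P β (x (φ (σ k))) - P β w) : ℝ) ≤ 0 :=
        hob _ (hPmem β (x (φ (σ k))))
      have h2 : (inner ℝ (x (φ (σ k)) - P β (x (φ (σ k)))) (w - P β w) : ℝ)
          ≤ ‖x (φ (σ k)) - P β (x (φ (σ k)))‖ * ‖w - P β w‖ := real_inner_le_norm _ _
      have h3 : ‖x (φ (σ k)) - P β (x (φ (σ k)))‖ = Metric.infDist (x (φ (σ k))) (C β) :=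
        (hdistP β (x (φ (σ k)))).symm
      have hsum' : (w - x (φ (σ k))) + (x (φ (σ k)) - P β (x (φ (σ k))))
          + (P β (x (φ (σ k))) - P β w) = w - P β w := by abel
      have hsplit : ‖w - P β w‖^2 =
          (inner ℝ (w - x (φ (σ k))) (w - P β w) : ℝ)
            + inner ℝ (x (φ (σ k)) - P β (x (φ (σ k)))) (w - P β w)
            + inner ℝ (P β (x (φ (σ k))) - P β w) (w - P β w) := by
        rw [← inner_add_left, ← inner_add_left, hsum', real_inner_self_eq_norm_sq]
      have h4 : (inner ℝ (P β (x (φ (σ k))) - P β w) (w - P β w) : ℝ) ≤ 0 := by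
        rwa [real_inner_comm]
      have h5 : (inner ℝ (w - x (φ (σ k))) (w - P β w) : ℝ)
          = (inner ℝ w (w - P β w) : ℝ) - inner ℝ (x (φ (σ k))) (w - P β w) :=
        inner_sub_left _ _ _
      rw [hsplit, h5]
      rw [h3] at h2
      linarith
    have hrhs : Tendsto (fun k => ((inner ℝ w (w - P β w) : ℝ)
        - inner ℝ (x (φ (σ k))) (w - P β w))
        + Metric.infDist (x (φ (σ k))) (C β) * ‖w - P β w‖) atTop (nhds 0) := by
      have t1 : Tendsto (fun k => (inner ℝ w (w - P β w) : ℝ)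
          - inner ℝ (x (φ (σ k))) (w - P β w)) atTop (nhds 0) := by
        have := (tendsto_const_nhds (x := (inner ℝ w (w - P β w) : ℝ))
          (f := atTop (α := ℕ))).sub (hweak (w - P β w))
        simpa using this
      have t2 : Tendsto (fun k => Metric.infDist (x (φ (σ k))) (C β) * ‖w - P β w‖)
          atTop (nhds 0) := by
        simpa using he.mul_const ‖w - P β w‖
      simpa using t1.add t2
    have hle : ‖w - P β w‖^2 ≤ 0 := ge_of_tendsto' hrhs hineq
    have hz : ‖w - P β w‖ = 0 := by nlinarith [sq_nonneg ‖w - P β w‖, norm_nonneg (w - P β w)]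
    have hwq : w = P β w := by
      have := norm_eq_zero.mp hz
      rwa [sub_eq_zero] at this
    rw [hwq]
    exact hPmem β w
  exact ⟨w, Set.mem_iInter.mpr hwC, fun k => φ (σ k), hψmono, hweak⟩
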